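/- arXiv:0906.4252 — 6 statements merged into one kernel-verified Lean document; each statement's English description precedes it below -/
import Mathlib

section
/- Let A be a unital associative ℂ-algebra and δ ∈ ℂ with δ ≠ 0. Let U₁, U₂, U₃, U₄ ∈ A satisfy the Hecke relations H1–H3 (Uᵢ² = δUᵢ for i = 1,2,3,4; UᵢUⱼ = UⱼUᵢ for |i−j| > 1; UᵢU_{i+1}Uᵢ − Uᵢ = U_{i+1}UᵢU_{i+1} − U_{i+1} for i = 1,2,3) together with the SU(3)-Temperley–Lieb relations (Uᵢ − U_{i+2}U_{i+1}Uᵢ + U_{i+1})(U_{i+1}U_{i+2}U_{i+1} − U_{i+1}) = 0 for i = 1 and i = 2. Set Fᵢ = UᵢU_{i+1}Uᵢ − Uᵢ. Then F₁F₃F₁ = δ·F₁U₄. -/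
set_option maxHeartbeats 4000000 in
/-- Let `A` be a unital associative ℂ-algebra and `δ ∈ ℂ` with `δ ≠ 0`.
Let `U₁, U₂, U₃, U₄ ∈ A` satisfy the Hecke relations H1–H3 together with the
SU(3)-Temperley–Lieb relations at `i = 1` and `i = 2`.
Set `Fᵢ = UᵢU_{i+1}Uᵢ − Uᵢ`.  Then `F₁F₃F₁ = δ·F₁U₄`. -/
theorem stmt1 (A : Type*) [Ring A] [Algebra ℂ A] (δ : ℂ) (hδ : δ ≠ 0)
    (U₁ U₂ U₃ U₄ : A)
    (h1 : U₁ * U₁ = δ • U₁) (h2 : U₂ * U₂ = δ • U₂)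
    (h3 : U₃ * U₃ = δ • U₃) (h4 : U₄ * U₄ = δ • U₄)
    (c13 : U₁ * U₃ = U₃ * U₁) (c14 : U₁ * U₄ = U₄ * U₁) (c24 : U₂ * U₄ = U₄ * U₂)
    (b1 : U₁ * U₂ * U₁ - U₁ = U₂ * U₁ * U₂ - U₂)
    (b2 : U₂ * U₃ * U₂ - U₂ = U₃ * U₂ * U₃ - U₃)
    (b3 : U₃ * U₄ * U₃ - U₃ = U₄ * U₃ * U₄ - U₄)
    (s1 : (U₁ - U₃ * U₂ * U₁ + U₂) * (U₂ * U₃ * U₂ - U₂) = 0)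
    (s2 : (U₂ - U₄ * U₃ * U₂ + U₃) * (U₃ * U₄ * U₃ - U₃) = 0) :
    (U₁ * U₂ * U₁ - U₁) * (U₃ * U₄ * U₃ - U₃) * (U₁ * U₂ * U₁ - U₁)
      = δ • ((U₁ * U₂ * U₁ - U₁) * U₄) := by
  have zh1 : U₁ * U₁ - δ • U₁ = 0 := sub_eq_zero_of_eq h1
  have zh2 : U₂ * U₂ - δ • U₂ = 0 := sub_eq_zero_of_eq h2
  have zh3 : U₃ * U₃ - δ • U₃ = 0 := sub_eq_zero_of_eq h3
  have zh4 : U₄ * U₄ - δ • U₄ = 0 := sub_eq_zero_of_eq h4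
  have zc13 : U₁ * U₃ - U₃ * U₁ = 0 := sub_eq_zero_of_eq c13
  have zc14 : U₁ * U₄ - U₄ * U₁ = 0 := sub_eq_zero_of_eq c14
  have zc24 : U₂ * U₄ - U₄ * U₂ = 0 := sub_eq_zero_of_eq c24
  have zb1 : U₁ * U₂ * U₁ - U₁ - (U₂ * U₁ * U₂ - U₂) = 0 := sub_eq_zero_of_eq b1
  have zb2 : U₂ * U₃ * U₂ - U₂ - (U₃ * U₂ * U₃ - U₃) = 0 := sub_eq_zero_of_eq b2
  have zb3 : U₃ * U₄ * U₃ - U₃ - (U₄ * U₃ * U₄ - U₄) = 0 := sub_eq_zero_of_eq b3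
  have key : (U₁ * U₂ * U₁ - U₁) * (U₃ * U₄ * U₃ - U₃) * (U₁ * U₂ * U₁ - U₁)
      - δ • ((U₁ * U₂ * U₁ - U₁) * U₄) =
      -(δ • (U₄ * ((U₁ - U₃ * U₂ * U₁ + U₂) * (U₂ * U₃ * U₂ - U₂)) * U₄)) +
      δ • ((U₁ * (U₁ * U₂ * U₁ - U₁ - (U₂ * U₁ * U₂ - U₂)) * U₄ * U₁)) +
      -(δ • ((U₁ * (U₁ * U₂ * U₁ - U₁ - (U₂ * U₁ * U₂ - U₂)) * U₄ * U₄))) +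
      δ • ((U₁ * U₂ * U₄ * U₃ * (U₁ * U₂ * U₁ - U₁ - (U₂ * U₁ * U₂ - U₂)) * U₄)) +
      δ • ((U₄ * U₃ * (U₁ * U₂ * U₁ - U₁ - (U₂ * U₁ * U₂ - U₂)) * U₃ * U₂ * U₄)) +
      -(δ • ((U₄ * U₃ * (U₁ * U₂ * U₁ - U₁ - (U₂ * U₁ * U₂ - U₂)) * U₄))) +
      δ • ((U₁ * U₄ * (U₂ * U₃ * U₂ - U₂ - (U₃ * U₂ * U₃ - U₃)) * U₁ * U₂ * U₄)) +
      δ • ((U₄ * (U₂ * U₃ * U₂ - U₂ - (U₃ * U₂ * U₃ - U₃)) * U₂ * U₄)) +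
      δ • ((U₁ * (U₃ * U₄ * U₃ - U₃ - (U₄ * U₃ * U₄ - U₄)))) +
      -(δ • ((U₁ * (U₃ * U₄ * U₃ - U₃ - (U₄ * U₃ * U₄ - U₄)) * U₂ * U₁))) +
      -(δ • ((U₁ * U₂ * U₁ * (U₃ * U₄ * U₃ - U₃ - (U₄ * U₃ * U₄ - U₄))))) +
      δ • ((U₁ * U₂ * U₁ * (U₃ * U₄ * U₃ - U₃ - (U₄ * U₃ * U₄ - U₄)) * U₂ * U₁)) +
      (U₁ * (U₁ * U₃ - U₃ * U₁)) +
      -((U₁ * (U₁ * U₃ - U₃ * U₁) * U₂ * U₁)) +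
      -((U₁ * (U₁ * U₃ - U₃ * U₁) * U₄ * U₃)) +
      (U₁ * (U₁ * U₃ - U₃ * U₁) * U₄ * U₃ * U₂ * U₁) +
      -((U₁ * U₂ * U₁ * (U₁ * U₃ - U₃ * U₁))) +
      (U₁ * U₂ * U₁ * (U₁ * U₃ - U₃ * U₁) * U₂ * U₁) +
      (U₁ * U₂ * U₁ * (U₁ * U₃ - U₃ * U₁) * U₄ * U₃) +
      -((U₁ * U₂ * U₁ * (U₁ * U₃ - U₃ * U₁) * U₄ * U₃ * U₂ * U₁)) +
      (U₁ * U₂ * U₁ * U₃ * U₄ * (U₁ * U₃ - U₃ * U₁)) +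
      -((U₁ * U₂ * U₁ * U₃ * U₄ * (U₁ * U₃ - U₃ * U₁) * U₂ * U₁)) +
      δ • ((U₁ * U₂ * U₄ * (U₁ * U₃ - U₃ * U₁) * U₂ * U₁ * U₄)) +
      -(δ • ((U₁ * U₂ * U₄ * (U₁ * U₃ - U₃ * U₁) * U₄))) +
      -((U₁ * U₃ * U₄ * (U₁ * U₃ - U₃ * U₁))) +
      (U₁ * U₃ * U₄ * (U₁ * U₃ - U₃ * U₁) * U₂ * U₁) +
      δ • ((U₁ * U₄ * (U₁ * U₃ - U₃ * U₁) * U₂ * U₄)) +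
      -(δ • ((U₁ * U₄ * U₃ * U₂ * (U₁ * U₃ - U₃ * U₁) * U₂ * U₄))) +
      δ • ((U₄ * (U₁ * U₃ - U₃ * U₁) * U₂ * U₁ * U₃ * U₂ * U₄)) +
      -(δ • ((U₄ * (U₁ * U₃ - U₃ * U₁) * U₂ * U₁ * U₄))) +
      -(δ • ((U₄ * (U₁ * U₃ - U₃ * U₁) * U₃ * U₂ * U₄))) +
      δ • ((U₄ * (U₁ * U₃ - U₃ * U₁) * U₄)) +
      -(δ • (((U₁ * U₄ - U₄ * U₁) * U₂ * U₃ * U₂ * U₄))) +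
      δ • (((U₁ * U₄ - U₄ * U₁) * U₂ * U₄)) +
      δ • (((U₁ * U₄ - U₄ * U₁) * U₃ * U₂ * U₁ * U₃ * U₂ * U₄)) +
      -(δ • (((U₁ * U₄ - U₄ * U₁) * U₃ * U₂ * U₁ * U₄))) +
      -(δ • (((U₁ * U₄ - U₄ * U₁) * U₃ * U₃ * U₂ * U₄))) +
      δ • (((U₁ * U₄ - U₄ * U₁) * U₃ * U₄)) +
      -(δ • (δ • ((U₁ * (U₁ * U₄ - U₄ * U₁))))) +
      δ • ((U₁ * (U₁ * U₄ - U₄ * U₁) * U₃ * U₂ * U₄)) +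
      -(δ • ((U₁ * U₂ * (U₁ * U₄ - U₄ * U₁) * U₂ * U₄))) +
      δ • ((U₁ * U₂ * (U₁ * U₄ - U₄ * U₁) * U₃ * U₂ * U₁ * U₄)) +
      -(δ • ((U₁ * U₂ * (U₁ * U₄ - U₄ * U₁) * U₃ * U₄))) +
      δ • (δ • ((U₁ * U₂ * U₁ * (U₁ * U₄ - U₄ * U₁)))) +
      (U₁ * U₂ * U₁ * U₃ * (U₁ * U₄ - U₄ * U₁) * U₃) +
      -((U₁ * U₂ * U₁ * U₃ * (U₁ * U₄ - U₄ * U₁) * U₃ * U₂ * U₁)) +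
      -(δ • ((U₁ * U₂ * U₁ * U₄ * U₃ * U₂ * (U₁ * U₄ - U₄ * U₁)))) +
      -((U₁ * U₃ * (U₁ * U₄ - U₄ * U₁) * U₃)) +
      (U₁ * U₃ * (U₁ * U₄ - U₄ * U₁) * U₃ * U₂ * U₁) +
      δ • ((U₁ * U₄ * U₃ * U₂ * (U₁ * U₄ - U₄ * U₁))) +
      -(δ • (((U₂ * U₄ - U₄ * U₂) * U₂ * U₃ * U₂ * U₄))) +
      δ • (((U₂ * U₄ - U₄ * U₂) * U₃ * U₂ * U₂ * U₄)) +
      -(δ • ((U₁ * (U₂ * U₄ - U₄ * U₂) * U₁))) +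
      -(δ • ((U₁ * (U₂ * U₄ - U₄ * U₂) * U₁ * U₂ * U₄))) +
      δ • ((U₁ * (U₂ * U₄ - U₄ * U₂) * U₃ * U₂ * U₁ * U₂ * U₄)) +
      -(δ • ((U₁ * (U₂ * U₄ - U₄ * U₂) * U₃ * U₂ * U₄))) +
      δ • ((U₁ * (U₂ * U₄ - U₄ * U₂) * U₄)) +
      δ • ((U₁ * U₂ * U₁ * (U₂ * U₄ - U₄ * U₂) * U₁)) +
      -(δ • ((U₁ * U₂ * U₁ * (U₂ * U₄ - U₄ * U₂) * U₄))) +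
      -(δ • ((U₁ * U₂ * U₁ * U₄ * U₃ * (U₂ * U₄ - U₄ * U₂) * U₁))) +
      δ • ((U₁ * U₄ * U₃ * (U₂ * U₄ - U₄ * U₂) * U₁)) +
      -(δ • ((U₂ * (U₂ * U₄ - U₄ * U₂) * U₃ * U₂ * U₄))) +
      -(δ • (((U₁ * U₁ - δ • U₁) * U₂ * U₁ * U₄ * U₁))) +
      δ • (((U₁ * U₁ - δ • U₁) * U₂ * U₁ * U₄ * U₄)) +
      -(((U₁ * U₁ - δ • U₁) * U₃)) +
      ((U₁ * U₁ - δ • U₁) * U₃ * U₂ * U₁) +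
      ((U₁ * U₁ - δ • U₁) * U₃ * U₄ * U₃) +
      -(((U₁ * U₁ - δ • U₁) * U₃ * U₄ * U₃ * U₂ * U₁)) +
      δ • (δ • (((U₁ * U₁ - δ • U₁) * U₄))) +
      δ • (((U₁ * U₁ - δ • U₁) * U₄ * U₁)) +
      -(δ • (((U₁ * U₁ - δ • U₁) * U₄ * U₃ * U₂ * U₄))) +
      -(δ • (((U₁ * U₁ - δ • U₁) * U₄ * U₄))) +
      (U₁ * U₂ * (U₁ * U₁ - δ • U₁) * U₃) +
      -((U₁ * U₂ * (U₁ * U₁ - δ • U₁) * U₃ * U₂ * U₁)) +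
      -((U₁ * U₂ * (U₁ * U₁ - δ • U₁) * U₃ * U₄ * U₃)) +
      (U₁ * U₂ * (U₁ * U₁ - δ • U₁) * U₃ * U₄ * U₃ * U₂ * U₁) +
      -(δ • (δ • ((U₁ * U₂ * (U₁ * U₁ - δ • U₁) * U₄)))) +
      δ • (((U₂ * U₂ - δ • U₂) * U₄ * U₃ * U₂ * U₄)) +
      -(δ • ((U₂ * U₄ * U₃ * (U₂ * U₂ - δ • U₂) * U₄))) +
      δ • ((U₁ * U₄ * (U₃ * U₃ - δ • U₃) * U₂ * U₄)) +
      -(δ • (δ • ((U₁ * (U₄ * U₄ - δ • U₄))))) +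
      δ • (δ • ((U₁ * U₂ * U₁ * (U₄ * U₄ - δ • U₄)))) := by
    noncomm_ring [smul_add, smul_neg, smul_smul, smul_sub]
  rw [zh1, zh2, zh3, zh4, zc13, zc14, zc24, zb1, zb2, zb3, s1] at key
  simp only [mul_zero, zero_mul, smul_zero, neg_zero, add_zero, zero_add] at key
  exact sub_eq_zero.mp key
end

section
/- Let A be a unital ℂ-algebra, q ∈ ℂ nonzero, δ = q + q⁻¹, and let g₁, g₂, g₃ ∈ A satisfy (q⁻¹·1 − gⱼ)(q·1 + gⱼ) = 0 for j = 1,2,3, g₁g₃ = g₃g₁, and gᵢg_{i+1}gᵢ = g_{i+1}gᵢg_{i+1} for i = 1,2. For σ ∈ S₄, let g_σ be the product g_{i₁}⋯g_{i_r} along any reduced expression of σ into adjacent transpositions s_{i₁}⋯s_{i_r} (this is well defined by the braid relations). Set Uⱼ = q⁻¹·1 − gⱼ. Then the q-antisymmetrizer Σ_{σ ∈ S₄} (−q)^{ℓ(σ)} g_σ (where ℓ is the Coxeter length) equals zero if and only if (U₁ − U₃U₂U₁ + U₂)(U₂U₃U₂ − U₂) = 0. -/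
set_option maxHeartbeats 4000000
set_option maxRecDepth 4000


/-- Let `A` be a unital ℂ-algebra, `q ∈ ℂ` nonzero, `δ = q + q⁻¹`, and let
`g₁, g₂, g₃ ∈ A` satisfy the Hecke quadratic relation, far commutation `g₁g₃ = g₃g₁`,
and the braid relations.  For `σ ∈ S₄`, `g_σ` is the product of the `gᵢ` along any
reduced expression of `σ` (well defined by the braid relations); below the
q-antisymmetrizer `Σ_{σ ∈ S₄} (−q)^{ℓ(σ)} g_σ` is written out as the explicit sum of
its 24 terms, one reduced expression per permutation (obtained from the coset
decomposition `S₄ = S₃·{e, s₃, s₃s₂, s₃s₂s₁}`).  Setting `Uⱼ = q⁻¹·1 − gⱼ`, the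
q-antisymmetrizer vanishes iff `(U₁ − U₃U₂U₁ + U₂)(U₂U₃U₂ − U₂) = 0`. -/
theorem stmt4 (A : Type*) [Ring A] [Algebra ℂ A] (q : ℂ) (hq : q ≠ 0)
    (δ : ℂ) (hδ : δ = q + q⁻¹)
    (g₁ g₂ g₃ : A)
    (hquad1 : (q⁻¹ • (1 : A) - g₁) * (q • (1 : A) + g₁) = 0)
    (hquad2 : (q⁻¹ • (1 : A) - g₂) * (q • (1 : A) + g₂) = 0)
    (hquad3 : (q⁻¹ • (1 : A) - g₃) * (q • (1 : A) + g₃) = 0)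
    (hcomm : g₁ * g₃ = g₃ * g₁)
    (hbraid1 : g₁ * g₂ * g₁ = g₂ * g₁ * g₂)
    (hbraid2 : g₂ * g₃ * g₂ = g₃ * g₂ * g₃)
    (U₁ U₂ U₃ : A)
    (hU1 : U₁ = q⁻¹ • (1 : A) - g₁) (hU2 : U₂ = q⁻¹ • (1 : A) - g₂)
    (hU3 : U₃ = q⁻¹ • (1 : A) - g₃) :
    ((1 : A)
      - q • g₁ - q • g₂ - q • g₃
      + q ^ 2 • (g₁ * g₂) + q ^ 2 • (g₂ * g₁) + q ^ 2 • (g₁ * g₃)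
      + q ^ 2 • (g₂ * g₃) + q ^ 2 • (g₃ * g₂)
      - q ^ 3 • (g₁ * g₂ * g₁) - q ^ 3 • (g₁ * g₂ * g₃) - q ^ 3 • (g₂ * g₁ * g₃)
      - q ^ 3 • (g₁ * g₃ * g₂) - q ^ 3 • (g₂ * g₃ * g₂) - q ^ 3 • (g₃ * g₂ * g₁)
      + q ^ 4 • (g₁ * g₂ * g₁ * g₃) + q ^ 4 • (g₁ * g₂ * g₃ * g₂)
      + q ^ 4 • (g₂ * g₁ * g₃ * g₂) + q ^ 4 • (g₁ * g₃ * g₂ * g₁)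
      + q ^ 4 • (g₂ * g₃ * g₂ * g₁)
      - q ^ 5 • (g₁ * g₂ * g₁ * g₃ * g₂) - q ^ 5 • (g₁ * g₂ * g₃ * g₂ * g₁)
      - q ^ 5 • (g₂ * g₁ * g₃ * g₂ * g₁)
      + q ^ 6 • (g₁ * g₂ * g₁ * g₃ * g₂ * g₁) = 0)
    ↔ (U₁ - U₃ * U₂ * U₁ + U₂) * (U₂ * U₃ * U₂ - U₂) = 0 := by
  have hq1 : q⁻¹ * q = 1 := inv_mul_cancel₀ hq
  have hR0 : (q * q⁻¹) • (1 : A) - 1 = 0 := by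
    rw [mul_inv_cancel₀ hq, one_smul, sub_self]
  have hE1 : g₁ * g₁ - ((1 : A) + (q⁻¹ - q) • g₁) = 0 := by
    have h : g₁ * g₁ - ((1 : A) + (q⁻¹ - q) • g₁)
        = (q⁻¹ * q) • (1 : A) - 1 - (q⁻¹ • (1 : A) - g₁) * (q • (1 : A) + g₁) := by
      simp only [mul_add, add_mul, mul_sub, sub_mul, smul_mul_assoc, mul_smul_comm,
        smul_smul, one_mul, mul_one, smul_sub, smul_add, sub_smul]
      module
    rw [h, hq1, hquad1, one_smul, sub_self, zero_sub, neg_zero]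
  have hE2 : g₂ * g₂ - ((1 : A) + (q⁻¹ - q) • g₂) = 0 := by
    have h : g₂ * g₂ - ((1 : A) + (q⁻¹ - q) • g₂)
        = (q⁻¹ * q) • (1 : A) - 1 - (q⁻¹ • (1 : A) - g₂) * (q • (1 : A) + g₂) := by
      simp only [mul_add, add_mul, mul_sub, sub_mul, smul_mul_assoc, mul_smul_comm,
        smul_smul, one_mul, mul_one, smul_sub, smul_add, sub_smul]
      module
    rw [h, hq1, hquad2, one_smul, sub_self, zero_sub, neg_zero]
  have hE3 : g₃ * g₃ - ((1 : A) + (q⁻¹ - q) • g₃) = 0 := by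
    have h : g₃ * g₃ - ((1 : A) + (q⁻¹ - q) • g₃)
        = (q⁻¹ * q) • (1 : A) - 1 - (q⁻¹ • (1 : A) - g₃) * (q • (1 : A) + g₃) := by
      simp only [mul_add, add_mul, mul_sub, sub_mul, smul_mul_assoc, mul_smul_comm,
        smul_smul, one_mul, mul_one, smul_sub, smul_add, sub_smul]
      module
    rw [h, hq1, hquad3, one_smul, sub_self, zero_sub, neg_zero]
  have hC : g₁ * g₃ - g₃ * g₁ = 0 := sub_eq_zero_of_eq hcomm
  have hB1 : g₁ * g₂ * g₁ - g₂ * g₁ * g₂ = 0 := sub_eq_zero_of_eq hbraid1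
  have hB2 : g₂ * g₃ * g₂ - g₃ * g₂ * g₃ = 0 := sub_eq_zero_of_eq hbraid2
  have key : ((1 : A)
      - q • g₁ - q • g₂ - q • g₃
      + q ^ 2 • (g₁ * g₂) + q ^ 2 • (g₂ * g₁) + q ^ 2 • (g₁ * g₃)
      + q ^ 2 • (g₂ * g₃) + q ^ 2 • (g₃ * g₂)
      - q ^ 3 • (g₁ * g₂ * g₁) - q ^ 3 • (g₁ * g₂ * g₃) - q ^ 3 • (g₂ * g₁ * g₃)
      - q ^ 3 • (g₁ * g₃ * g₂) - q ^ 3 • (g₂ * g₃ * g₂) - q ^ 3 • (g₃ * g₂ * g₁)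
      + q ^ 4 • (g₁ * g₂ * g₁ * g₃) + q ^ 4 • (g₁ * g₂ * g₃ * g₂)
      + q ^ 4 • (g₂ * g₁ * g₃ * g₂) + q ^ 4 • (g₁ * g₃ * g₂ * g₁)
      + q ^ 4 • (g₂ * g₃ * g₂ * g₁)
      - q ^ 5 • (g₁ * g₂ * g₁ * g₃ * g₂) - q ^ 5 • (g₁ * g₂ * g₃ * g₂ * g₁)
      - q ^ 5 • (g₂ * g₁ * g₃ * g₂ * g₁)
      + q ^ 6 • (g₁ * g₂ * g₁ * g₃ * g₂ * g₁))
      = (-(q ^ 6)) • ((U₁ - U₃ * U₂ * U₁ + U₂) * (U₂ * U₃ * U₂ - U₂)) := by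
    rw [hU1, hU2, hU3]
    have cert : ((1 : A)
      - q • g₁ - q • g₂ - q • g₃
      + q ^ 2 • (g₁ * g₂) + q ^ 2 • (g₂ * g₁) + q ^ 2 • (g₁ * g₃)
      + q ^ 2 • (g₂ * g₃) + q ^ 2 • (g₃ * g₂)
      - q ^ 3 • (g₁ * g₂ * g₁) - q ^ 3 • (g₁ * g₂ * g₃) - q ^ 3 • (g₂ * g₁ * g₃)
      - q ^ 3 • (g₁ * g₃ * g₂) - q ^ 3 • (g₂ * g₃ * g₂) - q ^ 3 • (g₃ * g₂ * g₁)
      + q ^ 4 • (g₁ * g₂ * g₁ * g₃) + q ^ 4 • (g₁ * g₂ * g₃ * g₂)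
      + q ^ 4 • (g₂ * g₁ * g₃ * g₂) + q ^ 4 • (g₁ * g₃ * g₂ * g₁)
      + q ^ 4 • (g₂ * g₃ * g₂ * g₁)
      - q ^ 5 • (g₁ * g₂ * g₁ * g₃ * g₂) - q ^ 5 • (g₁ * g₂ * g₃ * g₂ * g₁)
      - q ^ 5 • (g₂ * g₁ * g₃ * g₂ * g₁)
      + q ^ 6 • (g₁ * g₂ * g₁ * g₃ * g₂ * g₁))
        + q ^ 6 • (((q⁻¹ • (1 : A) - g₁) - (q⁻¹ • (1 : A) - g₃) * (q⁻¹ • (1 : A) - g₂) * (q⁻¹ • (1 : A) - g₁) + (q⁻¹ • (1 : A) - g₂))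
          * ((q⁻¹ • (1 : A) - g₂) * (q⁻¹ • (1 : A) - g₃) * (q⁻¹ • (1 : A) - g₂) - (q⁻¹ • (1 : A) - g₂)))
        = (q ^ 6 * q⁻¹ - q ^ 6 * q⁻¹ ^ 3 - q ^ 7 * q⁻¹ ^ 2) • ((g₁ * g₂ * g₁ - g₂ * g₁ * g₂))
      + (q ^ 6 * q⁻¹ ^ 2) • ((g₁ * g₂ * g₁ - g₂ * g₁ * g₂) * g₃)
      + (-q ^ 6 * q⁻¹) • ((g₁ * g₂ * g₁ - g₂ * g₁ * g₂) * g₃ * g₂)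
      + (-q ^ 6 * q⁻¹ ^ 3 - q ^ 7 * q⁻¹ ^ 2) • ((g₂ * g₃ * g₂ - g₃ * g₂ * g₃))
      + (q ^ 6 * q⁻¹ ^ 2) • ((g₂ * g₃ * g₂ - g₃ * g₂ * g₃) * g₁)
      + (-q ^ 6 * q⁻¹) • ((g₂ * g₃ * g₂ - g₃ * g₂ * g₃) * g₁ * g₂)
      + (q ^ 6 * q⁻¹ ^ 2 + q ^ 7 * q⁻¹) • ((g₂ * g₃ * g₂ - g₃ * g₂ * g₃) * g₂)
      + (q ^ 6 * q⁻¹ ^ 4) • ((g₁ * g₃ - g₃ * g₁))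
      + (q ^ 6 * q⁻¹ - q ^ 6 * q⁻¹ ^ 3 - q ^ 7 * q⁻¹ ^ 2) • ((g₁ * g₃ - g₃ * g₁) * g₂)
      + (-q ^ 6 + q ^ 6 * q⁻¹ ^ 2 + q ^ 7 * q⁻¹) • ((g₁ * g₃ - g₃ * g₁) * g₂ * g₁)
      + (-q ^ 6 * q⁻¹) • ((g₁ * g₃ - g₃ * g₁) * g₂ * g₁ * g₃)
      + (q ^ 6) • ((g₁ * g₃ - g₃ * g₁) * g₂ * g₁ * g₃ * g₂)
      + (q ^ 6 * q⁻¹ ^ 2) • ((g₁ * g₃ - g₃ * g₁) * g₂ * g₃)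
      + (-q ^ 6 * q⁻¹) • ((g₁ * g₃ - g₃ * g₁) * g₂ * g₃ * g₂)
      + (-q ^ 6 * q⁻¹ ^ 3) • ((g₁ * g₃ - g₃ * g₁) * g₃)
      + (q ^ 6 * q⁻¹ ^ 2) • ((g₁ * g₃ - g₃ * g₁) * g₃ * g₂)
      + (-q ^ 6 + (4 : ℂ) * q ^ 6 * q⁻¹ ^ 2 - (2 : ℂ) * q ^ 6 * q⁻¹ ^ 4 + q ^ 7 * q⁻¹ - q ^ 7 * q⁻¹ ^ 3) • ((g₂ * g₂ - ((1 : A) + (q⁻¹ - q) • g₂)))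
      + (-q ^ 6 * q⁻¹ + q ^ 6 * q⁻¹ ^ 3) • ((g₂ * g₂ - ((1 : A) + (q⁻¹ - q) • g₂)) * g₂)
      + (-q ^ 6 * q⁻¹ + q ^ 6 * q⁻¹ ^ 3) • ((g₂ * g₂ - ((1 : A) + (q⁻¹ - q) • g₂)) * g₃)
      + (q ^ 6 - q ^ 6 * q⁻¹ ^ 2) • ((g₂ * g₂ - ((1 : A) + (q⁻¹ - q) • g₂)) * g₃ * g₂)
      + (-q ^ 6 * q⁻¹ ^ 2 - q ^ 6 * q⁻¹ ^ 4) • ((g₃ * g₃ - ((1 : A) + (q⁻¹ - q) • g₃)))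
      + (q ^ 6 * q⁻¹ + q ^ 6 * q⁻¹ ^ 3) • ((g₃ * g₃ - ((1 : A) + (q⁻¹ - q) • g₃)) * g₂)
      + (q ^ 6 * q⁻¹ ^ 2) • (g₁ * (g₂ * g₃ * g₂ - g₃ * g₂ * g₃))
      + (-q ^ 6 * q⁻¹) • (g₁ * (g₂ * g₃ * g₂ - g₃ * g₂ * g₃) * g₁)
      + (q ^ 6) • (g₁ * (g₂ * g₃ * g₂ - g₃ * g₂ * g₃) * g₁ * g₂)
      + (-q ^ 6 * q⁻¹) • (g₁ * (g₂ * g₃ * g₂ - g₃ * g₂ * g₃) * g₂)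
      + (-q ^ 6 * q⁻¹ + q ^ 6 * q⁻¹ ^ 3) • (g₁ * (g₂ * g₂ - ((1 : A) + (q⁻¹ - q) • g₂)))
      + (q ^ 6 * q⁻¹ ^ 3) • (g₁ * (g₃ * g₃ - ((1 : A) + (q⁻¹ - q) • g₃)))
      + (-q ^ 6 * q⁻¹ ^ 2) • (g₁ * (g₃ * g₃ - ((1 : A) + (q⁻¹ - q) • g₃)) * g₂)
      + (q ^ 6) • (g₁ * g₂ * (g₁ * g₃ - g₃ * g₁) * g₂ * g₁)
      + (q ^ 6) • (g₁ * g₂ * g₃ * (g₁ * g₂ * g₁ - g₂ * g₁ * g₂))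
      + (q ^ 6 * q⁻¹) • (g₁ * g₂ * g₃ * (g₂ * g₂ - ((1 : A) + (q⁻¹ - q) • g₂)))
      + (q ^ 6 * q⁻¹) • (g₁ * g₃ * g₂ * (g₁ * g₃ - g₃ * g₁))
      + (-q ^ 6) • (g₁ * g₃ * g₂ * (g₁ * g₃ - g₃ * g₁) * g₂)
      + (-q ^ 6 * q⁻¹) • (g₂ * (g₁ * g₃ - g₃ * g₁) * g₂ * g₁)
      + (-q ^ 6 * q⁻¹ ^ 2) • (g₂ * g₁ * (g₂ * g₂ - ((1 : A) + (q⁻¹ - q) • g₂)))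
      + (-q ^ 6 * q⁻¹) • (g₂ * g₃ * (g₁ * g₂ * g₁ - g₂ * g₁ * g₂))
      + (-q ^ 6 * q⁻¹ ^ 2 - q ^ 7 * q⁻¹) • (g₂ * g₃ * (g₂ * g₂ - ((1 : A) + (q⁻¹ - q) • g₂)))
      + (-q ^ 6 + q ^ 6 * q⁻¹ ^ 2 + q ^ 7 * q⁻¹) • (g₃ * (g₁ * g₂ * g₁ - g₂ * g₁ * g₂))
      + (-q ^ 6 * q⁻¹) • (g₃ * (g₁ * g₂ * g₁ - g₂ * g₁ * g₂) * g₃)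
      + (q ^ 6) • (g₃ * (g₁ * g₂ * g₁ - g₂ * g₁ * g₂) * g₃ * g₂)
      + (-q ^ 6 * q⁻¹ + (2 : ℂ) * q ^ 6 * q⁻¹ ^ 3 + q ^ 7 * q⁻¹ ^ 2) • (g₃ * (g₂ * g₂ - ((1 : A) + (q⁻¹ - q) • g₂)))
      + (-q ^ 6 * q⁻¹ ^ 2) • (g₃ * (g₂ * g₂ - ((1 : A) + (q⁻¹ - q) • g₂)) * g₂)
      + (-q ^ 6 * q⁻¹ ^ 2) • (g₃ * (g₂ * g₂ - ((1 : A) + (q⁻¹ - q) • g₂)) * g₃)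
      + (q ^ 6 * q⁻¹) • (g₃ * (g₂ * g₂ - ((1 : A) + (q⁻¹ - q) • g₂)) * g₃ * g₂)
      + (-q ^ 6 * q⁻¹ ^ 2) • (g₃ * g₁ * (g₂ * g₂ - ((1 : A) + (q⁻¹ - q) • g₂)))
      + (-q ^ 6 * q⁻¹ ^ 2) • (g₃ * g₂ * (g₁ * g₃ - g₃ * g₁))
      + (q ^ 6 * q⁻¹) • (g₃ * g₂ * (g₁ * g₃ - g₃ * g₁) * g₂)
      + (q ^ 6 * q⁻¹) • (g₃ * g₂ * g₁ * (g₂ * g₂ - ((1 : A) + (q⁻¹ - q) • g₂)))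
      + (-(1:ℂ) - q * q⁻¹ - q ^ 2 * q⁻¹ ^ 2 - q ^ 3 * q⁻¹ ^ 3 - q ^ 4 * q⁻¹ ^ 4 - q ^ 5 * q⁻¹ ^ 5 + q ^ 6 - q ^ 6 * q⁻¹ ^ 2) • (((q * q⁻¹) • (1 : A) - 1))
      + (q + q ^ 2 * q⁻¹ + q ^ 3 * q⁻¹ ^ 2 + q ^ 4 * q⁻¹ ^ 3 + q ^ 5 * q⁻¹ ^ 4) • (((q * q⁻¹) • (1 : A) - 1) * g₁)
      + (-q ^ 2 - q ^ 3 * q⁻¹ - q ^ 4 * q⁻¹ ^ 2 - q ^ 5 * q⁻¹ ^ 3 + q ^ 6 - q ^ 6 * q⁻¹ ^ 2) • (((q * q⁻¹) • (1 : A) - 1) * g₁ * g₂)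
      + (q ^ 3 + q ^ 4 * q⁻¹ + q ^ 5 * q⁻¹ ^ 2 + q ^ 6 * q⁻¹) • (((q * q⁻¹) • (1 : A) - 1) * g₁ * g₂ * g₁)
      + (-q ^ 4 - q ^ 5 * q⁻¹) • (((q * q⁻¹) • (1 : A) - 1) * g₁ * g₂ * g₁ * g₃)
      + (q ^ 5) • (((q * q⁻¹) • (1 : A) - 1) * g₁ * g₂ * g₁ * g₃ * g₂)
      + (q ^ 3 + q ^ 4 * q⁻¹ + q ^ 5 * q⁻¹ ^ 2) • (((q * q⁻¹) • (1 : A) - 1) * g₁ * g₂ * g₃)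
      + (-q ^ 4 - q ^ 5 * q⁻¹ - q ^ 6) • (((q * q⁻¹) • (1 : A) - 1) * g₁ * g₂ * g₃ * g₂)
      + (q ^ 5) • (((q * q⁻¹) • (1 : A) - 1) * g₁ * g₂ * g₃ * g₂ * g₁)
      + (-q ^ 2 - q ^ 3 * q⁻¹ - q ^ 4 * q⁻¹ ^ 2 - q ^ 5 * q⁻¹ ^ 3 - q ^ 6 * q⁻¹ ^ 2) • (((q * q⁻¹) • (1 : A) - 1) * g₁ * g₃)
      + (q ^ 3 + q ^ 4 * q⁻¹ + q ^ 5 * q⁻¹ ^ 2 + (2 : ℂ) * q ^ 6 * q⁻¹) • (((q * q⁻¹) • (1 : A) - 1) * g₁ * g₃ * g₂)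
      + (-q ^ 4 - q ^ 5 * q⁻¹ - q ^ 6) • (((q * q⁻¹) • (1 : A) - 1) * g₁ * g₃ * g₂ * g₁)
      + (q + q ^ 2 * q⁻¹ + q ^ 3 * q⁻¹ ^ 2 + q ^ 4 * q⁻¹ ^ 3 + q ^ 5 * q⁻¹ ^ 4 - (2 : ℂ) * q ^ 6 * q⁻¹ + q ^ 6 * q⁻¹ ^ 3 - q ^ 7 + q ^ 7 * q⁻¹ ^ 2) • (((q * q⁻¹) • (1 : A) - 1) * g₂)
      + (-q ^ 2 - q ^ 3 * q⁻¹ - q ^ 4 * q⁻¹ ^ 2 - q ^ 5 * q⁻¹ ^ 3) • (((q * q⁻¹) • (1 : A) - 1) * g₂ * g₁)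
      + (q ^ 3 + q ^ 4 * q⁻¹ + q ^ 5 * q⁻¹ ^ 2) • (((q * q⁻¹) • (1 : A) - 1) * g₂ * g₁ * g₃)
      + (-q ^ 4 - q ^ 5 * q⁻¹) • (((q * q⁻¹) • (1 : A) - 1) * g₂ * g₁ * g₃ * g₂)
      + (q ^ 5) • (((q * q⁻¹) • (1 : A) - 1) * g₂ * g₁ * g₃ * g₂ * g₁)
      + (-q ^ 2 - q ^ 3 * q⁻¹ - q ^ 4 * q⁻¹ ^ 2 - q ^ 5 * q⁻¹ ^ 3 - q ^ 6 * q⁻¹ ^ 2) • (((q * q⁻¹) • (1 : A) - 1) * g₂ * g₃)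
      + (q ^ 3 + q ^ 4 * q⁻¹ + q ^ 5 * q⁻¹ ^ 2 + (2 : ℂ) * q ^ 6 * q⁻¹ + q ^ 7) • (((q * q⁻¹) • (1 : A) - 1) * g₂ * g₃ * g₂)
      + (-q ^ 4 - q ^ 5 * q⁻¹) • (((q * q⁻¹) • (1 : A) - 1) * g₂ * g₃ * g₂ * g₁)
      + (q + q ^ 2 * q⁻¹ + q ^ 3 * q⁻¹ ^ 2 + q ^ 4 * q⁻¹ ^ 3 + q ^ 5 * q⁻¹ ^ 4 + (2 : ℂ) * q ^ 6 * q⁻¹ + q ^ 6 * q⁻¹ ^ 3) • (((q * q⁻¹) • (1 : A) - 1) * g₃)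
      + (-q ^ 2 - q ^ 3 * q⁻¹ - q ^ 4 * q⁻¹ ^ 2 - q ^ 5 * q⁻¹ ^ 3 - q ^ 6 - (2 : ℂ) * q ^ 6 * q⁻¹ ^ 2 - q ^ 7 * q⁻¹) • (((q * q⁻¹) • (1 : A) - 1) * g₃ * g₂)
      + (q ^ 3 + q ^ 4 * q⁻¹ + q ^ 5 * q⁻¹ ^ 2) • (((q * q⁻¹) • (1 : A) - 1) * g₃ * g₂ * g₁) := by
      simp only [mul_add, add_mul, mul_sub, sub_mul, smul_mul_assoc, mul_smul_comm,
        smul_smul, one_mul, mul_one, smul_sub, smul_add, sub_smul, mul_assoc]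
      module
    simp only [hE1, hE2, hE3, hC, hB1, hB2, hR0, mul_zero, zero_mul, smul_zero,
      add_zero, zero_add] at cert
    rw [eq_neg_of_add_eq_zero_left cert, neg_smul]
  rw [key, smul_eq_zero]
  simp [hq]
end

section
/- Let A be a unital ℂ-algebra and tr : A → ℂ a linear functional with tr(xy) = tr(yx) for all x, y ∈ A. Let M ⊆ A be a subalgebra. Let q ∈ ℂ be nonzero, δ = q + q⁻¹, τ = q² + 1 + q⁻², and assume τ ≠ 0. Let u, v ∈ A satisfy u² = δu, and suppose the Markov properties hold: tr(xu) = (δ/τ)·tr(x) for all x ∈ M, and tr(yv) = (δ/τ)·tr(y) for all y in the subalgebra of A generated by M ∪ {u}. Then tr((uvu − u)x) = (δ/τ²)·tr(x) for every x ∈ M. -/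
/-- Let `A` be a unital ℂ-algebra and `tr : A →ₗ[ℂ] ℂ` a linear functional with
`tr(xy) = tr(yx)`.  Let `M ⊆ A` be a subalgebra.  Let `q ∈ ℂ` be nonzero,
`δ = q + q⁻¹`, `τ = q² + 1 + q⁻²` with `τ ≠ 0`.  Let `u, v ∈ A` with `u² = δu`, and
suppose the Markov properties hold: `tr(xu) = (δ/τ)·tr(x)` for `x ∈ M`, and
`tr(yv) = (δ/τ)·tr(y)` for `y` in the subalgebra generated by `M ∪ {u}`.
Then `tr((uvu − u)x) = (δ/τ²)·tr(x)` for every `x ∈ M`. -/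
theorem stmt5 (A : Type*) [Ring A] [Algebra ℂ A]
    (tr : A →ₗ[ℂ] ℂ) (htr : ∀ x y : A, tr (x * y) = tr (y * x))
    (M : Subalgebra ℂ A) (q : ℂ) (hq : q ≠ 0)
    (δ τ : ℂ) (hδ : δ = q + q⁻¹) (hτ : τ = q ^ 2 + 1 + (q ^ 2)⁻¹) (hτ0 : τ ≠ 0)
    (u v : A) (hu : u * u = δ • u)
    (hMarkov_u : ∀ x ∈ M, tr (x * u) = (δ / τ) * tr x)
    (hMarkov_v : ∀ y ∈ Algebra.adjoin ℂ ((M : Set A) ∪ {u}),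
      tr (y * v) = (δ / τ) * tr y) :
    ∀ x ∈ M, tr ((u * v * u - u) * x) = (δ / τ ^ 2) * tr x := by
  intro x hx
  have hu' : u ∈ Algebra.adjoin ℂ ((M : Set A) ∪ {u}) :=
    Algebra.subset_adjoin (Or.inr rfl)
  have hx' : x ∈ Algebra.adjoin ℂ ((M : Set A) ∪ {u}) :=
    Algebra.subset_adjoin (Or.inl hx)
  have hkey : δ ^ 2 = τ + 1 := by
    subst hδ hτ; field_simp; ring
  have h2 : tr (u * x * u) = δ * ((δ / τ) * tr x) := by
    have : tr (u * (x * u)) = tr (x * (u * u)) := by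
      rw [htr, mul_assoc]
    rw [← mul_assoc] at this
    rw [this, hu, mul_smul_comm, map_smul, smul_eq_mul, hMarkov_u x hx]
  have h1 : tr (u * v * u * x) = (δ / τ) * (δ * ((δ / τ) * tr x)) := by
    have e1 : tr (u * v * (u * x)) = tr (u * x * u * v) := by
      rw [htr (u * v) (u * x), mul_assoc, mul_assoc, mul_assoc]
    rw [mul_assoc (u * v) u x] at *
    rw [e1, hMarkov_v _ (mul_mem (mul_mem hu' hx') hu'), h2]
  have hux : tr (u * x) = (δ / τ) * tr x := by rw [htr]; exact hMarkov_u x hx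
  rw [sub_mul, map_sub, h1, hux]
  field_simp
  linear_combination tr x * δ * hkey
end

section
/- Let k ≥ 1 be a natural number not divisible by 3. Let T_k = {(a,b) ∈ ℕ² : a + b ≤ k} and let A : T_k → T_k be the map A(a,b) = (k − a − b, a). For (a,b) ∈ T_k let e(a,b) ∈ {0,1,2} be the residue of the integer k(a − b) modulo 3. Then the number of pairs (a,b) ∈ T_k such that A^{e(a,b)}(a,b) = (b,a) equals 3·⌊(k+2)/2⌋. -/
/-- Let `k ≥ 1` be a natural number not divisible by 3.  Let
`T_k = {(a,b) ∈ ℕ² : a + b ≤ k}` and let `A(a,b) = (k − a − b, a)`.  For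
`(a,b) ∈ T_k` let `e(a,b) ∈ {0,1,2}` be the residue of the integer `k(a − b)` mod 3.
Then the number of pairs `(a,b) ∈ T_k` with `A^{e(a,b)}(a,b) = (b,a)` equals
`3·⌊(k+2)/2⌋`. -/
theorem stmt7 (k : ℕ) (hk : 1 ≤ k) (h3 : ¬ (3 ∣ k)) :
    ((Finset.range (k + 1) ×ˢ Finset.range (k + 1)).filter
        (fun p => p.1 + p.2 ≤ k ∧
          (fun p : ℕ × ℕ => (k - p.1 - p.2, p.1))^[
              (((k : ℤ) * ((p.1 : ℤ) - (p.2 : ℤ))) % 3).toNat] p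
            = (p.2, p.1))).card
      = 3 * ((k + 2) / 2) := by
  classical
  set f : ℕ × ℕ → ℕ × ℕ := fun p : ℕ × ℕ => (k - p.1 - p.2, p.1) with hf
  have hK : (k : ℤ) % 3 = 1 ∨ (k : ℤ) % 3 = 2 := by omega
  have key : ∀ a b : ℕ, a + b ≤ k →
      (f^[(((k : ℤ) * ((a : ℤ) - (b : ℤ))) % 3).toNat] (a, b) = (b, a)
        ↔ (a = b ∨ a + 2 * b = k ∨ 2 * a + b = k)) := by
    intro a b hab
    have hit0 : f^[0] (a, b) = (a, b) := rfl
    have hit1 : f^[1] (a, b) = (k - a - b, a) := rfl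
    have hit2 : f^[2] (a, b) = (k - (k - a - b) - a, k - a - b) := rfl
    constructor
    · intro hit
      have hn : (((k : ℤ) * ((a : ℤ) - (b : ℤ))) % 3).toNat = 0 ∨
          (((k : ℤ) * ((a : ℤ) - (b : ℤ))) % 3).toNat = 1 ∨
          (((k : ℤ) * ((a : ℤ) - (b : ℤ))) % 3).toNat = 2 := by omega
      rcases hn with h | h | h <;> rw [h] at hit
      · rw [hit0, Prod.mk.injEq] at hit
        exact Or.inl hit.1
      · rw [hit1, Prod.mk.injEq] at hit
        exact Or.inr (Or.inl (by omega))
      · rw [hit2, Prod.mk.injEq] at hit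
        exact Or.inr (Or.inr (by omega))
    · rintro (h | h | h)
      · have hm : ((k : ℤ) * ((a : ℤ) - (b : ℤ))) % 3 = 0 := by
          have : (a : ℤ) - (b : ℤ) = 0 := by omega
          rw [this, mul_zero]; rfl
        rw [hm]
        rw [show ((0 : ℤ)).toNat = 0 from rfl, hit0, Prod.mk.injEq]
        exact ⟨h, h.symm⟩
      · have hm : ((k : ℤ) * ((a : ℤ) - (b : ℤ))) % 3 = 1 := by
          rw [Int.mul_emod]
          rcases hK with hK1 | hK1
          · have hd : ((a : ℤ) - (b : ℤ)) % 3 = 1 := by omega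
            rw [hK1, hd]; decide
          · have hd : ((a : ℤ) - (b : ℤ)) % 3 = 2 := by omega
            rw [hK1, hd]; decide
        rw [hm, show ((1 : ℤ)).toNat = 1 from rfl, hit1, Prod.mk.injEq]
        exact ⟨by omega, rfl⟩
      · have hm : ((k : ℤ) * ((a : ℤ) - (b : ℤ))) % 3 = 2 := by
          rw [Int.mul_emod]
          rcases hK with hK1 | hK1
          · have hd : ((a : ℤ) - (b : ℤ)) % 3 = 2 := by omega
            rw [hK1, hd]; decide
          · have hd : ((a : ℤ) - (b : ℤ)) % 3 = 1 := by omega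
            rw [hK1, hd]; decide
        rw [hm, show ((2 : ℤ)).toNat = 2 from rfl, hit2, Prod.mk.injEq]
        exact ⟨by omega, by omega⟩
  set S1 : Finset (ℕ × ℕ) := (Finset.range (k / 2 + 1)).image fun a => (a, a) with hS1
  set S2 : Finset (ℕ × ℕ) := (Finset.range (k / 2 + 1)).image fun b => (k - 2 * b, b) with hS2
  set S3 : Finset (ℕ × ℕ) := (Finset.range (k / 2 + 1)).image fun a => (a, k - 2 * a) with hS3
  have hset : ((Finset.range (k + 1) ×ˢ Finset.range (k + 1)).filter
        (fun p => p.1 + p.2 ≤ k ∧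
          f^[(((k : ℤ) * ((p.1 : ℤ) - (p.2 : ℤ))) % 3).toNat] p = (p.2, p.1)))
      = S1 ∪ S2 ∪ S3 := by
    ext ⟨a, b⟩
    simp only [hS1, hS2, hS3, Finset.mem_filter, Finset.mem_product, Finset.mem_range,
      Finset.mem_union, Finset.mem_image, Prod.mk.injEq]
    constructor
    · rintro ⟨⟨ha, hb⟩, hab, hit⟩
      rcases (key a b hab).mp hit with h | h | h
      · exact Or.inl (Or.inl ⟨a, by omega, rfl, h⟩)
      · exact Or.inl (Or.inr ⟨b, by omega, by omega, rfl⟩)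
      · exact Or.inr ⟨a, by omega, rfl, by omega⟩
    · rintro ((⟨x, hx, hxa, hxb⟩ | ⟨x, hx, hxa, hxb⟩) | ⟨x, hx, hxa, hxb⟩)
      · have hab : a + b ≤ k := by omega
        exact ⟨⟨by omega, by omega⟩, hab, (key a b hab).mpr (Or.inl (by omega))⟩
      · have hab : a + b ≤ k := by omega
        exact ⟨⟨by omega, by omega⟩, hab, (key a b hab).mpr (Or.inr (Or.inl (by omega)))⟩
      · have hab : a + b ≤ k := by omega
        exact ⟨⟨by omega, by omega⟩, hab, (key a b hab).mpr (Or.inr (Or.inr (by omega)))⟩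
  have hd12 : Disjoint S1 S2 := by
    rw [Finset.disjoint_left]
    rintro ⟨a, b⟩ h1 h2
    simp only [hS1, hS2, Finset.mem_image, Finset.mem_range, Prod.mk.injEq] at h1 h2
    obtain ⟨x, hx, hxa, hxb⟩ := h1
    obtain ⟨y, hy, hya, hyb⟩ := h2
    omega
  have hd13 : Disjoint S1 S3 := by
    rw [Finset.disjoint_left]
    rintro ⟨a, b⟩ h1 h2
    simp only [hS1, hS3, Finset.mem_image, Finset.mem_range, Prod.mk.injEq] at h1 h2
    obtain ⟨x, hx, hxa, hxb⟩ := h1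
    obtain ⟨y, hy, hya, hyb⟩ := h2
    omega
  have hd23 : Disjoint S2 S3 := by
    rw [Finset.disjoint_left]
    rintro ⟨a, b⟩ h1 h2
    simp only [hS2, hS3, Finset.mem_image, Finset.mem_range, Prod.mk.injEq] at h1 h2
    obtain ⟨x, hx, hxa, hxb⟩ := h1
    obtain ⟨y, hy, hya, hyb⟩ := h2
    omega
  have hc1 : S1.card = k / 2 + 1 := by
    rw [hS1, Finset.card_image_of_injOn, Finset.card_range]
    intro x _ y _ h
    exact congrArg Prod.fst h
  have hc2 : S2.card = k / 2 + 1 := by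
    rw [hS2, Finset.card_image_of_injOn, Finset.card_range]
    intro x _ y _ h
    exact congrArg Prod.snd h
  have hc3 : S3.card = k / 2 + 1 := by
    rw [hS3, Finset.card_image_of_injOn, Finset.card_range]
    intro x _ y _ h
    exact congrArg Prod.fst h
  rw [hset, Finset.card_union_of_disjoint (Finset.disjoint_union_left.mpr ⟨hd13, hd23⟩),
    Finset.card_union_of_disjoint hd12, hc1, hc2, hc3]
  omega
end

section
/- Let k ≥ 0 be a natural number divisible by 3. Let T_k = {(a,b) ∈ ℕ² : a + b ≤ k} and let A : T_k → T_k be the map A(a,b) = (k − a − b, a). Then the sum, over all pairs (a,b) ∈ T_k with a ≡ b (mod 3), of the number of exponents j ∈ {0,1,2} with A^j(a,b) = (b,a), equals 3·⌊(k+2)/2⌋. -/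
/-- Let `k ≥ 0` be divisible by 3.  Let `T_k = {(a,b) ∈ ℕ² : a + b ≤ k}` and
`A(a,b) = (k − a − b, a)`.  Then the sum, over all `(a,b) ∈ T_k` with
`a ≡ b (mod 3)`, of the number of exponents `j ∈ {0,1,2}` with `A^j(a,b) = (b,a)`,
equals `3·⌊(k+2)/2⌋`. -/
theorem stmt8 (k : ℕ) (h3 : 3 ∣ k) :
    (∑ p ∈ (Finset.range (k + 1) ×ˢ Finset.range (k + 1)).filter
        (fun p => p.1 + p.2 ≤ k ∧ p.1 % 3 = p.2 % 3),
      ((Finset.range 3).filter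
        (fun j => (fun p : ℕ × ℕ => (k - p.1 - p.2, p.1))^[j] p = (p.2, p.1))).card)
      = 3 * ((k + 2) / 2) := by
  classical
  set S := (Finset.range (k + 1) ×ˢ Finset.range (k + 1)).filter
      (fun p => p.1 + p.2 ≤ k ∧ p.1 % 3 = p.2 % 3) with hS
  have key : ∀ p ∈ S,
      ((Finset.range 3).filter
        (fun j => (fun p : ℕ × ℕ => (k - p.1 - p.2, p.1))^[j] p = (p.2, p.1))).card
      = ((if p.1 = p.2 then 1 else 0) + ((if k = p.1 + 2*p.2 then 1 else 0)
          + (if k = 2*p.1 + p.2 then 1 else 0))) := by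
    intro p hp
    simp only [hS, Finset.mem_filter, Finset.mem_product, Finset.mem_range] at hp
    obtain ⟨⟨h1, h2⟩, hle, hmod⟩ := hp
    rw [Finset.card_filter]
    rw [show (3:ℕ) = 2+1 from rfl, Finset.sum_range_succ, Finset.sum_range_succ,
      Finset.sum_range_one]
    have e0 : ((fun p : ℕ × ℕ => (k - p.1 - p.2, p.1))^[0] p = (p.2, p.1))
        ↔ (p.1 = p.2) := by
      simp [Prod.ext_iff]; omega
    have e1 : ((fun p : ℕ × ℕ => (k - p.1 - p.2, p.1))^[1] p = (p.2, p.1))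
        ↔ (k = p.1 + 2*p.2) := by
      simp [Prod.ext_iff]; omega
    have e2 : ((fun p : ℕ × ℕ => (k - p.1 - p.2, p.1))^[2] p = (p.2, p.1))
        ↔ (k = 2*p.1 + p.2) := by
      simp [Prod.ext_iff, Function.iterate_succ, Function.comp]; omega
    rw [if_congr e0 rfl rfl, if_congr e1 rfl rfl, if_congr e2 rfl rfl]
    ring
  rw [Finset.sum_congr rfl key, Finset.sum_add_distrib, Finset.sum_add_distrib,
    ← Finset.card_filter, ← Finset.card_filter, ← Finset.card_filter]
  have c0 : (S.filter (fun p => p.1 = p.2)).card = k/2 + 1 := by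
    have : S.filter (fun p => p.1 = p.2)
        = (Finset.range (k/2+1)).image (fun a => (a, a)) := by
      ext p
      simp only [hS, Finset.mem_filter, Finset.mem_product, Finset.mem_range,
        Finset.mem_image, Prod.ext_iff]
      constructor
      · rintro ⟨⟨⟨h1, h2⟩, hle, hmod⟩, he⟩
        exact ⟨p.1, by omega, by omega, by omega⟩
      · rintro ⟨a, ha, h1, h2⟩
        refine ⟨⟨⟨by omega, by omega⟩, by omega, by omega⟩, by omega⟩
    rw [this, Finset.card_image_of_injective _ (fun a b h => by simp [Prod.ext_iff] at h; omega),
      Finset.card_range]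
  have c1 : (S.filter (fun p => k = p.1 + 2*p.2)).card = k/2 + 1 := by
    have : S.filter (fun p => k = p.1 + 2*p.2)
        = (Finset.range (k/2+1)).image (fun b => (k - 2*b, b)) := by
      ext p
      simp only [hS, Finset.mem_filter, Finset.mem_product, Finset.mem_range,
        Finset.mem_image, Prod.ext_iff]
      constructor
      · rintro ⟨⟨⟨h1, h2⟩, hle, hmod⟩, he⟩
        exact ⟨p.2, by omega, by omega, by omega⟩
      · rintro ⟨b, hb, h1, h2⟩
        refine ⟨⟨⟨by omega, by omega⟩, by omega, by omega⟩, by omega⟩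
    rw [this, Finset.card_image_of_injective _ (fun a b h => by simp [Prod.ext_iff] at h; omega),
      Finset.card_range]
  have c2 : (S.filter (fun p => k = 2*p.1 + p.2)).card = k/2 + 1 := by
    have : S.filter (fun p => k = 2*p.1 + p.2)
        = (Finset.range (k/2+1)).image (fun a => (a, k - 2*a)) := by
      ext p
      simp only [hS, Finset.mem_filter, Finset.mem_product, Finset.mem_range,
        Finset.mem_image, Prod.ext_iff]
      constructor
      · rintro ⟨⟨⟨h1, h2⟩, hle, hmod⟩, he⟩
        exact ⟨p.1, by omega, by omega, by omega⟩
      · rintro ⟨a, ha, h1, h2⟩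
        refine ⟨⟨⟨by omega, by omega⟩, by omega, by omega⟩, by omega⟩
    rw [this, Finset.card_image_of_injective _ (fun a b h => by simp [Prod.ext_iff] at h; omega),
      Finset.card_range]
  rw [c0, c1, c2]
  omega
end

section
/- For every natural number k ≥ 3 with k ≠ 7 and k ≠ 8, the four rational numbers T_A(k) = (k+1)(k+2)/2, T_D(k) = (k+1)(k+2)/6 + c_k (where c_k = 2/3 if 3 divides k and c_k = 0 otherwise), T_{A*}(k) = ⌊(k+2)/2⌋ and T_{D*}(k) = 3⌊(k+2)/2⌋ are pairwise distinct. Moreover, for k = 7 and k = 8 one has T_D(k) = T_{D*}(k), while all the other pairs among the four numbers are distinct. -/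
/-- Trace of the `𝒜^{(k+3)}` modular invariant. -/
def TA (k : ℕ) : ℚ := (k + 1) * (k + 2) / 2

/-- Trace of the `𝒟^{(k+3)}` modular invariant. -/
def TD (k : ℕ) : ℚ := (k + 1) * (k + 2) / 6 + (if 3 ∣ k then 2 / 3 else 0)

/-- Trace of the `𝒜^{(k+3)∗}` modular invariant, `⌊(k+2)/2⌋`. -/
def TAstar (k : ℕ) : ℚ := ((k + 2) / 2 : ℕ)

/-- Trace of the `𝒟^{(k+3)∗}` modular invariant, `3⌊(k+2)/2⌋`. -/
def TDstar (k : ℕ) : ℚ := 3 * ((k + 2) / 2 : ℕ)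

/-- For every natural `k ≥ 3` with `k ≠ 7` and `k ≠ 8`, the four rationals
`T_A(k), T_D(k), T_{A*}(k), T_{D*}(k)` are pairwise distinct.  Moreover, for `k = 7`
and `k = 8` one has `T_D(k) = T_{D*}(k)`, while all other pairs are distinct. -/
theorem stmt9 (k : ℕ) (hk : 3 ≤ k) :
    ((k ≠ 7 ∧ k ≠ 8) →
      (TA k ≠ TD k ∧ TA k ≠ TAstar k ∧ TA k ≠ TDstar k ∧
        TD k ≠ TAstar k ∧ TD k ≠ TDstar k ∧ TAstar k ≠ TDstar k)) ∧
    ((k = 7 ∨ k = 8) →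
      (TD k = TDstar k ∧ TA k ≠ TD k ∧ TA k ≠ TAstar k ∧ TA k ≠ TDstar k ∧
        TD k ≠ TAstar k ∧ TAstar k ≠ TDstar k)) := by
  rcases le_or_gt k 9 with h9 | h9
  · interval_cases k <;>
      constructor <;> intro h <;> simp_all [TA, TD, TAstar, TDstar] <;> norm_num
  · have hK : (10 : ℚ) ≤ (k : ℚ) := by exact_mod_cast h9
    have hm1 : ((((k + 2) / 2 : ℕ) : ℚ)) ≤ ((k : ℚ) + 2) / 2 := by
      have : (2 : ℕ) * ((k + 2) / 2) ≤ k + 2 := by omega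
      have h2 : (2 : ℚ) * (((k + 2) / 2 : ℕ) : ℚ) ≤ (k : ℚ) + 2 := by exact_mod_cast this
      linarith
    have hm2 : ((k : ℚ) + 1) / 2 ≤ ((((k + 2) / 2 : ℕ) : ℚ)) := by
      have : k + 1 ≤ 2 * ((k + 2) / 2) := by omega
      have h2 : (k : ℚ) + 1 ≤ 2 * (((k + 2) / 2 : ℕ) : ℚ) := by exact_mod_cast this
      linarith
    set M : ℚ := (((k + 2) / 2 : ℕ) : ℚ) with hM
    have hc : (if 3 ∣ k then (2 : ℚ) / 3 else 0) = 2/3 ∨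
        (if 3 ∣ k then (2 : ℚ) / 3 else 0) = 0 := by
      split <;> simp
    constructor
    · intro _
      unfold TA TD TAstar TDstar
      rw [← hM]
      rcases hc with hc | hc <;> rw [hc] <;>
        refine ⟨?_, ?_, ?_, ?_, ?_, ?_⟩ <;>
          first
          | (apply ne_of_gt; nlinarith)
          | (apply ne_of_lt; nlinarith)
    · rintro (rfl | rfl) <;> omega
end
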